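/- For every n ≥ 3, the degree sequence (n − 3, 3^{n−1}) (one vertex of degree n − 3 and n − 1 vertices of degree 3) has no Z_3-connected realization. -/

import Mathlib

open Finset

/-- A simple graph `G` is `A`-connected: for every zero-sum function `b` on vertices
there is an orientation together with a nowhere-zero `A`-valued edge labeling whose
boundary is `b`; this is encoded by a skew-symmetric function `f : V → V → A` which
is nonzero exactly on adjacent pairs. -/
def SimpleGraph.AConnS {V : Type} [Fintype V] (A : Type) [AddCommGroup A]
    (G : SimpleGraph V) : Prop :=
  ∀ b : V → A, ∑ v, b v = 0 →
    ∃ f : V → V → A, (∀ v w, f v w = - f w v) ∧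
      (∀ v w, G.Adj v w → f v w ≠ 0) ∧
      (∀ v w, ¬ G.Adj v w → f v w = 0) ∧
      ∀ v, ∑ w, f v w = b v

/-- `Z₃`-connectivity of a simple graph. -/
abbrev SimpleGraph.Z3Conn {V : Type} [Fintype V] (G : SimpleGraph V) : Prop :=
  G.AConnS (ZMod 3)

/-- `d` is the degree sequence of `G` (up to permutation of the entries). -/
def degSeq {n : ℕ} (G : SimpleGraph (Fin n)) (d : Fin n → ℕ) : Prop :=
  ∃ σ : Equiv.Perm (Fin n), ∀ i, (G.neighborSet (σ i)).ncard = d i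

/-- `d` is graphic: it is realized by some simple graph. -/
def Graphic {n : ℕ} (d : Fin n → ℕ) : Prop :=
  ∃ G : SimpleGraph (Fin n), degSeq G d

/-- for `n ≥ 3`, the sequence `(n-3, 3^{n-1})` has no `Z₃`-connected
realization. -/
theorem no_Z3_realization_nm3 (n : ℕ) (hn : 3 ≤ n) :
    ¬ ∃ G : SimpleGraph (Fin n),
        degSeq G (fun i => if (i : ℕ) = 0 then n - 3 else 3) ∧ G.Z3Conn := by
  rintro ⟨G, ⟨σ, hσ⟩, hZ⟩
  classical
  have hn0 : 0 < n := by omega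
  set i0 : Fin n := ⟨0, hn0⟩ with hi0
  set u0 : Fin n := σ i0 with hu0
  have hncard : ∀ v : Fin n, (G.neighborSet v).ncard = G.degree v := by
    intro v
    rw [Set.ncard_eq_toFinset_card']
    rfl
  have hdeg : ∀ v : Fin n, v ≠ u0 → G.degree v = 3 := by
    intro v hv
    have h := hσ (σ.symm v)
    simp only [Equiv.apply_symm_apply] at h
    rw [hncard] at h
    rw [h, if_neg]
    intro h0
    apply hv
    have h1 : σ.symm v = i0 := Fin.ext h0
    rw [hu0, ← h1, Equiv.apply_symm_apply]
  have hdeg0 : G.degree u0 = n - 3 := by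
    have h := hσ i0
    rw [hncard] at h
    exact h.trans (if_pos (show (i0 : ℕ) = 0 from rfl))
  obtain ⟨f, hskew, hnz, hz, hb⟩ := hZ
    (fun v => if v = u0 then 1 - (n : ZMod 3) else 1) (by
      rw [← Finset.add_sum_erase _ _ (Finset.mem_univ u0), if_pos rfl]
      have h2 : ∑ v ∈ Finset.univ.erase u0, (if v = u0 then 1 - (n : ZMod 3) else 1)
          = ((n - 1 : ℕ) : ZMod 3) := by
        rw [Finset.sum_congr rfl (fun v hv => if_neg (Finset.ne_of_mem_erase hv)),
          Finset.sum_const, Finset.card_erase_of_mem (Finset.mem_univ u0),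
          Finset.card_univ, Fintype.card_fin, nsmul_eq_mul, mul_one]
      rw [h2, Nat.cast_sub (by omega)]
      push_cast
      ring)
  have hval : ∀ x : ZMod 3, x ≠ 0 → x = 1 ∨ x = 2 := by decide
  -- count of 1-values at each vertex
  set c : Fin n → ℕ := fun v => (Finset.univ.filter (fun w => f v w = 1)).card with hc
  -- per-vertex: degree-3 vertices have exactly two 1's
  have key : ∀ v : Fin n, v ≠ u0 → c v = 2 := by
    intro v hv
    set A := G.neighborFinset v with hA
    have hAcard : A.card = 3 := by rw [hA]; exact hdeg v hv
    have hfe : Finset.univ.filter (fun w => f v w = 1)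
        = A.filter (fun w => f v w = 1) := by
      ext w
      simp only [Finset.mem_filter, Finset.mem_univ, true_and]
      constructor
      · intro h1
        refine ⟨?_, h1⟩
        rw [hA, SimpleGraph.mem_neighborFinset]
        by_contra hadj
        rw [hz v w hadj] at h1
        exact one_ne_zero h1.symm
      · exact fun h => h.2
    have hsum : ∑ w ∈ A, f v w = 1 := by
      have hbv := hb v
      rw [if_neg hv] at hbv
      rw [← hbv]
      apply Finset.sum_subset (Finset.subset_univ A)
      intro w _ hw
      apply hz
      rwa [hA, SimpleGraph.mem_neighborFinset] at hw
    set a := (A.filter (fun w => f v w = 1)).card with ha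
    have ha3 : a ≤ 3 := by
      have h4 := Finset.card_filter_le A (fun w => f v w = 1)
      omega
    have hsplit : ∑ w ∈ A, f v w = ((a : ZMod 3)) * 1 + ((3 - a : ℕ) : ZMod 3) * 2 := by
      rw [← Finset.sum_filter_add_sum_filter_not A (fun w => f v w = 1)]
      congr 1
      · rw [Finset.sum_congr rfl (fun w hw => (Finset.mem_filter.mp hw).2),
          Finset.sum_const, nsmul_eq_mul]
      · have h2 : ∀ w ∈ A.filter (fun w => ¬ f v w = 1), f v w = 2 := by
          intro w hw
          obtain ⟨hwA, hw1⟩ := Finset.mem_filter.mp hw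
          have hne : f v w ≠ 0 := hnz v w ((SimpleGraph.mem_neighborFinset _ _ _).mp hwA)
          rcases hval _ hne with h | h
          · exact absurd h hw1
          · exact h
        rw [Finset.sum_congr rfl h2, Finset.sum_const, nsmul_eq_mul]
        have hcard2 : (A.filter (fun w => ¬ f v w = 1)).card = 3 - a := by
          have := Finset.card_filter_add_card_filter_not
            (s := A) (p := fun w => f v w = 1)
          omega
        rw [hcard2]
    have hsplit' : ((a : ZMod 3)) * 1 + ((3 - a : ℕ) : ZMod 3) * 2 = 1 :=
      hsplit.symm.trans hsum
    have ha2 : a = 2 := by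
      interval_cases a <;> revert hsplit' <;> decide
    rw [hc]
    simp only [hfe, ← ha, ha2]
  -- swap: number of 1's into v equals number of 2's out of v, and globally balances
  have hpart : ∀ v : Fin n, c v + (Finset.univ.filter (fun w => f w v = 1)).card
      = G.degree v := by
    intro v
    have hiff : ∀ w, f w v = 1 ↔ f v w = 2 := by
      intro w
      rw [hskew w v]
      revert hval
      generalize f v w = x
      revert x
      decide
    have heq : Finset.univ.filter (fun w => f w v = 1)
        = Finset.univ.filter (fun w => f v w = 2) := by
      apply Finset.filter_congr
      intro w _
      exact hiff w
    rw [heq, hc]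
    have hunion : (Finset.univ.filter (fun w => f v w = 1))
        ∪ (Finset.univ.filter (fun w => f v w = 2)) = G.neighborFinset v := by
      ext w
      simp only [Finset.mem_union, Finset.mem_filter, Finset.mem_univ, true_and,
        SimpleGraph.mem_neighborFinset]
      constructor
      · rintro (h | h)
        · by_contra hadj
          rw [hz v w hadj] at h
          exact one_ne_zero h.symm
        · by_contra hadj
          rw [hz v w hadj] at h
          exact absurd h.symm (by decide)
      · intro hadj
        exact hval _ (hnz v w hadj)
    have hdisj : Disjoint (Finset.univ.filter (fun w => f v w = 1))
        (Finset.univ.filter (fun w => f v w = 2)) := by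
      rw [Finset.disjoint_filter]
      intro w _ h1 h2
      rw [h1] at h2
      exact absurd h2 (by decide)
    rw [← Finset.card_union_of_disjoint hdisj, hunion]
    rfl
  have hswap : ∑ v : Fin n, (Finset.univ.filter (fun w => f w v = 1)).card
      = ∑ v : Fin n, c v := by
    simp only [hc, Finset.card_filter]
    exact Finset.sum_comm
  have hdegsum : ∑ v : Fin n, G.degree v = (n - 3) + 3 * (n - 1) := by
    rw [← Finset.add_sum_erase _ _ (Finset.mem_univ u0), hdeg0]
    congr 1
    rw [Finset.sum_congr rfl (fun v hv => hdeg v (Finset.ne_of_mem_erase hv)),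
      Finset.sum_const, Finset.card_erase_of_mem (Finset.mem_univ u0),
      Finset.card_univ, Fintype.card_fin, smul_eq_mul]
    ring
  have htotal : 2 * ∑ v : Fin n, c v = (n - 3) + 3 * (n - 1) := by
    rw [← hdegsum, ← Finset.sum_congr rfl (fun v _ => hpart v)]
    rw [Finset.sum_add_distrib, hswap]
    ring
  have hge : 2 * (n - 1) ≤ ∑ v : Fin n, c v := by
    rw [← Finset.add_sum_erase _ _ (Finset.mem_univ u0)]
    have h3 : ∑ v ∈ Finset.univ.erase u0, c v = 2 * (n - 1) := by
      rw [Finset.sum_congr rfl (fun v hv => key v (Finset.ne_of_mem_erase hv)),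
        Finset.sum_const, Finset.card_erase_of_mem (Finset.mem_univ u0),
        Finset.card_univ, Fintype.card_fin, smul_eq_mul]
      ring
    omega
  omega
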